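/- Let N ≥ 1, Λ > 1, r₀ > 0, Φ > 0, and suppose at least two outlet pressures differ (there exists j with p_{N,j} ≠ p_{N,j+1}). Then the constrained minimization problem (P₂) — minimizing E(q,ξ) = r₀Φ² + Σ r₀ q_{i,j}²/ξ_{i,j} over pairs (q,ξ) with ξ positive satisfying the volume constraint Σ ξ_{i,j} = Λ-1 and the monotonicity constraint max(ξ_{i+1,2j-1}, ξ_{i+1,2j}) ≤ ξ_{i,j}, and q = M_N(ξ)^{-1} b_N the Poiseuille flow with total inlet flow Φ and outlet pressures p — has infimum r₀Φ²(1 + N²/(Λ-1)), and this infimum is not attained. -/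

import Mathlib

open Finset Matrix

/-- `ν_{i,j}`: the smallest `k` such that the binary digits of `i` and `j`
agree from position `k` on. -/
noncomputable def nuIdx (i j : ℕ) : ℕ :=
  sInf {k | ∀ l, k ≤ l → i.testBit l = j.testBit l}

/-- The resistance matrix `A_N(ξ)` of the dyadic tree (0-based outlet
indices): `a_{ij} = r₀ (1 + ∑_{(k,l) ∈ Π_{0→(N,i)}(N-ν_{i-1,j-1})} 1/ξ_{k,l})`,
the ancestor of outlet `i` at level `k` being branch `(k, (i-1)/2^{N-k}+1)`. -/
noncomputable def AN (N : ℕ) (r0 : ℝ) (ξ : ℕ → ℕ → ℝ) :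
    Matrix (Fin (2 ^ N)) (Fin (2 ^ N)) ℝ := fun i j =>
  r0 * (1 + ∑ k ∈ Finset.Icc 1 (N - nuIdx i.1 j.1),
    1 / ξ k (i.1 / 2 ^ (N - k) + 1))

/-- The matrix `M_N(ξ)` with rows `(A_N(ξ)vᵢ)ᵀ` for `i = 1,…,2^N - 1`
(`vᵢ = eᵢ - e_{i+1}`) and last row `u_Nᵀ = (1,…,1)`. -/
noncomputable def MN (N : ℕ) (r0 : ℝ) (ξ : ℕ → ℕ → ℝ) :
    Matrix (Fin (2 ^ N)) (Fin (2 ^ N)) ℝ := fun i j =>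
  if h : i.1 + 1 < 2 ^ N then
    (AN N r0 ξ).mulVec (Pi.single i 1 - Pi.single ⟨i.1 + 1, h⟩ 1) j
  else 1

/-- The right-hand side `b_N = (-⟨p,v₁⟩, …, -⟨p,v_{2^N-1}⟩, Φ)ᵀ`. -/
noncomputable def bN (N : ℕ) (p : Fin (2 ^ N) → ℝ) (Φ : ℝ) :
    Fin (2 ^ N) → ℝ := fun i =>
  if h : i.1 + 1 < 2 ^ N then
    -(p ⬝ᵥ (Pi.single i 1 - Pi.single ⟨i.1 + 1, h⟩ 1))
  else Φ

lemma mem_nuSet_iff {i j m : ℕ} :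
    (∀ l, m ≤ l → i.testBit l = j.testBit l) ↔ i / 2 ^ m = j / 2 ^ m := by
  constructor
  · intro h
    rw [← Nat.shiftRight_eq_div_pow, ← Nat.shiftRight_eq_div_pow]
    apply Nat.eq_of_testBit_eq
    intro k
    rw [Nat.testBit_shiftRight, Nat.testBit_shiftRight]
    exact h _ (Nat.le_add_right _ _)
  · intro h l hl
    have h2 : i >>> m = j >>> m := by
      rw [Nat.shiftRight_eq_div_pow, Nat.shiftRight_eq_div_pow]; exact h
    have := congrArg (fun n => Nat.testBit n (l - m)) h2
    simpa [Nat.testBit_shiftRight, Nat.add_sub_cancel' hl] using this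

lemma nuSet_nonempty (i j : ℕ) :
    Set.Nonempty {k | ∀ l, k ≤ l → i.testBit l = j.testBit l} := by
  refine ⟨max i j, fun l hl => ?_⟩
  have hi : i < 2 ^ l := lt_of_le_of_lt (le_trans (le_max_left i j) hl) (Nat.lt_two_pow_self (n := l))
  have hj : j < 2 ^ l := lt_of_le_of_lt (le_trans (le_max_right i j) hl) (Nat.lt_two_pow_self (n := l))
  rw [Nat.testBit_eq_false_of_lt hi, Nat.testBit_eq_false_of_lt hj]

lemma nuIdx_le_iff {i j m : ℕ} : nuIdx i j ≤ m ↔ i / 2 ^ m = j / 2 ^ m := by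
  constructor
  · intro h
    rw [← mem_nuSet_iff]
    intro l hl
    exact Nat.sInf_mem (nuSet_nonempty i j) l (le_trans h hl)
  · intro h
    exact Nat.sInf_le (mem_nuSet_iff.mpr h)

lemma nuIdx_comm (i j : ℕ) : nuIdx i j = nuIdx j i := by
  unfold nuIdx
  congr 1
  ext k
  exact ⟨fun h l hl => (h l hl).symm, fun h l hl => (h l hl).symm⟩

lemma nuIdx_le_of_lt {N i j : ℕ} (hi : i < 2 ^ N) (hj : j < 2 ^ N) : nuIdx i j ≤ N :=
  nuIdx_le_iff.mpr (by rw [Nat.div_eq_of_lt hi, Nat.div_eq_of_lt hj])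

/-- key: for `1 ≤ k ≤ N`, membership in the path range -/
lemma mem_range_iff {N i j k : ℕ} (hi : i < 2 ^ N) (hj : j < 2 ^ N) (hk1 : 1 ≤ k) (hkN : k ≤ N) :
    k ≤ N - nuIdx i j ↔ i / 2 ^ (N - k) = j / 2 ^ (N - k) := by
  rw [← nuIdx_le_iff]
  have hν := nuIdx_le_of_lt hi hj
  omega

/-- branch index of outlet `i` at level `k` -/
def beta (N k i : ℕ) : ℕ := i / 2 ^ (N - k) + 1

/-- flow through branch `(k,l)` -/
noncomputable def Qf (N k : ℕ) (x : Fin (2 ^ N) → ℝ) (l : ℕ) : ℝ :=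
  ∑ i ∈ Finset.univ.filter (fun i : Fin (2 ^ N) => beta N k i.1 = l), x i

lemma beta_mem {N k : ℕ} (hk : k ≤ N) (i : Fin (2 ^ N)) :
    beta N k i.1 ∈ Finset.Icc 1 (2 ^ k) := by
  simp only [Finset.mem_Icc, beta]
  refine ⟨Nat.succ_le_succ (Nat.zero_le _), ?_⟩
  · have : i.1 / 2 ^ (N - k) < 2 ^ k := by
      apply Nat.div_lt_of_lt_mul
      calc i.1 < 2 ^ N := i.2
        _ = 2 ^ (N - k) * 2 ^ k := by rw [← pow_add]; congr 1; omega
    omega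

lemma fiber_sum {N k : ℕ} (hk : k ≤ N) (F : ℕ → ℝ) (x : Fin (2 ^ N) → ℝ) :
    ∑ i, F (beta N k i.1) * x i = ∑ l ∈ Finset.Icc 1 (2 ^ k), F l * Qf N k x l := by
  rw [← Finset.sum_fiberwise_of_maps_to (fun i _ => beta_mem hk i)
    (fun i => F (beta N k i.1) * x i)]
  refine Finset.sum_congr rfl fun l _ => ?_
  rw [Qf, Finset.mul_sum]
  refine Finset.sum_congr rfl fun i hi => ?_
  rw [(Finset.mem_filter.mp hi).2]

/-- row formula for `A_N` -/
lemma AN_mulVec {N : ℕ} (r0 : ℝ) (ξ : ℕ → ℕ → ℝ) (x : Fin (2 ^ N) → ℝ) (i : Fin (2 ^ N)) :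
    (AN N r0 ξ).mulVec x i =
      r0 * ((∑ j, x j) + ∑ k ∈ Finset.Icc 1 N,
        (1 / ξ k (beta N k i.1)) * Qf N k x (beta N k i.1)) := by
  have key : ∀ j : Fin (2 ^ N),
      (∑ k ∈ Finset.Icc 1 (N - nuIdx i.1 j.1), 1 / ξ k (beta N k i.1)) =
      ∑ k ∈ Finset.Icc 1 N,
        if beta N k j.1 = beta N k i.1 then 1 / ξ k (beta N k i.1) else 0 := by
    intro j
    rw [← Finset.sum_filter]
    apply Finset.sum_congr _ (fun _ _ => rfl)
    refine Finset.ext fun k => ?_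
    rw [Finset.mem_filter]; simp only [Finset.mem_Icc, beta]
    constructor
    · intro ⟨hk1, hk2⟩
      have hkN : k ≤ N := le_trans hk2 (Nat.sub_le _ _)
      refine ⟨⟨hk1, hkN⟩, ?_⟩
      have := (mem_range_iff i.2 j.2 hk1 hkN).mp hk2
      omega
    · intro ⟨⟨hk1, hkN⟩, he⟩
      refine ⟨hk1, (mem_range_iff i.2 j.2 hk1 hkN).mpr (by omega)⟩
  simp only [Matrix.mulVec, dotProduct, AN]
  have expand : ∀ j : Fin (2 ^ N),
      r0 * (1 + ∑ k ∈ Finset.Icc 1 (N - nuIdx i.1 j.1), 1 / ξ k (i.1 / 2 ^ (N - k) + 1)) * x j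
      = r0 * x j + r0 * ((∑ k ∈ Finset.Icc 1 N,
          if beta N k j.1 = beta N k i.1 then 1 / ξ k (beta N k i.1) else 0) * x j) := by
    intro j
    rw [← key j]
    show r0 * (1 + ∑ k ∈ Finset.Icc 1 (N - nuIdx i.1 j.1), 1 / ξ k (beta N k i.1)) * x j = _
    ring
  rw [Finset.sum_congr rfl (fun j _ => expand j), Finset.sum_add_distrib, ← Finset.mul_sum,
    ← Finset.mul_sum, mul_add]
  congr 1
  congr 1
  calc ∑ j, (∑ k ∈ Finset.Icc 1 N,
          if beta N k j.1 = beta N k i.1 then 1 / ξ k (beta N k i.1) else 0) * x j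
      = ∑ j, ∑ k ∈ Finset.Icc 1 N,
          (if beta N k j.1 = beta N k i.1 then (1 / ξ k (beta N k i.1)) * x j else 0) := by
        refine Finset.sum_congr rfl fun j _ => ?_
        rw [Finset.sum_mul]
        exact Finset.sum_congr rfl fun k _ => by split <;> simp
    _ = ∑ k ∈ Finset.Icc 1 N, ∑ j,
          (if beta N k j.1 = beta N k i.1 then (1 / ξ k (beta N k i.1)) * x j else 0) :=
        Finset.sum_comm
    _ = ∑ k ∈ Finset.Icc 1 N, 1 / ξ k (beta N k i.1) * Qf N k x (beta N k i.1) := by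
        refine Finset.sum_congr rfl fun k _ => ?_
        rw [← Finset.sum_filter, Qf, Finset.mul_sum]

lemma AN_symm {N : ℕ} (r0 : ℝ) (ξ : ℕ → ℕ → ℝ) (i j : Fin (2 ^ N)) :
    AN N r0 ξ i j = AN N r0 ξ j i := by
  unfold AN
  rw [nuIdx_comm j.1 i.1]
  congr 2
  refine Finset.sum_congr rfl fun k hk => ?_
  simp only [Finset.mem_Icc] at hk
  obtain ⟨hk1, hk2⟩ := hk
  have hkN : k ≤ N := le_trans hk2 (Nat.sub_le _ _)
  rw [(mem_range_iff i.2 j.2 hk1 hkN).mp hk2]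

lemma energy_identity {N : ℕ} (r0 : ℝ) (ξ : ℕ → ℕ → ℝ) (x : Fin (2 ^ N) → ℝ) :
    x ⬝ᵥ (AN N r0 ξ).mulVec x =
      r0 * ((∑ i, x i) ^ 2 + ∑ k ∈ Finset.Icc 1 N, ∑ l ∈ Finset.Icc 1 (2 ^ k),
        (1 / ξ k l) * (Qf N k x l) ^ 2) := by
  simp only [dotProduct]
  calc ∑ i, x i * (AN N r0 ξ).mulVec x i
      = ∑ i, (r0 * ((∑ j, x j) * x i) + r0 * ((∑ k ∈ Finset.Icc 1 N,
          (1 / ξ k (beta N k i.1)) * Qf N k x (beta N k i.1)) * x i)) := by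
        refine Finset.sum_congr rfl fun i _ => ?_
        rw [AN_mulVec]; ring
    _ = r0 * ((∑ j, x j) * (∑ i, x i)) + r0 * (∑ i, (∑ k ∈ Finset.Icc 1 N,
          (1 / ξ k (beta N k i.1)) * Qf N k x (beta N k i.1)) * x i) := by
        rw [Finset.sum_add_distrib, ← Finset.mul_sum, ← Finset.mul_sum, ← Finset.mul_sum]
    _ = r0 * ((∑ i, x i) ^ 2) + r0 * (∑ k ∈ Finset.Icc 1 N, ∑ i,
          ((1 / ξ k (beta N k i.1)) * Qf N k x (beta N k i.1)) * x i) := by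
        rw [← sq, Finset.sum_congr rfl (fun i (_ : i ∈ Finset.univ) => Finset.sum_mul _ _ (x i)),
          Finset.sum_comm]
    _ = r0 * ((∑ i, x i) ^ 2) + r0 * (∑ k ∈ Finset.Icc 1 N, ∑ l ∈ Finset.Icc 1 (2 ^ k),
          (1 / ξ k l) * (Qf N k x l) ^ 2) := by
        congr 1
        congr 1
        refine Finset.sum_congr rfl fun k hk => ?_
        rw [fiber_sum (Finset.mem_Icc.mp hk).2 (fun l => (1 / ξ k l) * Qf N k x l) x]
        exact Finset.sum_congr rfl fun l _ => by ring
    _ = r0 * ((∑ i, x i) ^ 2 + ∑ k ∈ Finset.Icc 1 N, ∑ l ∈ Finset.Icc 1 (2 ^ k),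
          (1 / ξ k l) * (Qf N k x l) ^ 2) := by ring

lemma AN_transpose {N : ℕ} (r0 : ℝ) (ξ : ℕ → ℕ → ℝ) : (AN N r0 ξ)ᵀ = AN N r0 ξ := by
  ext i j; exact AN_symm r0 ξ j i

lemma dot_mulVec_symm {N : ℕ} (r0 : ℝ) (ξ : ℕ → ℕ → ℝ) (x y : Fin (2 ^ N) → ℝ) :
    x ⬝ᵥ (AN N r0 ξ).mulVec y = y ⬝ᵥ (AN N r0 ξ).mulVec x := by
  rw [dotProduct_mulVec, ← Matrix.mulVec_transpose, AN_transpose,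
    dotProduct_comm]

lemma MN_mulVec_row {N : ℕ} (r0 : ℝ) (ξ : ℕ → ℕ → ℝ) (x : Fin (2 ^ N) → ℝ)
    (i : Fin (2 ^ N)) (h : i.1 + 1 < 2 ^ N) :
    (MN N r0 ξ).mulVec x i =
      (AN N r0 ξ).mulVec x i - (AN N r0 ξ).mulVec x ⟨i.1 + 1, h⟩ := by
  have hM : ∀ j, MN N r0 ξ i j = AN N r0 ξ j i - AN N r0 ξ j ⟨i.1 + 1, h⟩ := by
    intro j
    simp only [MN, dif_pos h, Matrix.mulVec_sub, Pi.sub_apply, Matrix.mulVec_single, mul_one, Pi.smul_apply, MulOpposite.op_one, one_smul, Matrix.col_apply]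
  simp only [Matrix.mulVec, dotProduct]
  rw [← Finset.sum_sub_distrib]
  refine Finset.sum_congr rfl fun j _ => ?_
  rw [hM j, AN_symm r0 ξ j i, AN_symm r0 ξ j ⟨i.1 + 1, h⟩]
  ring

lemma MN_mulVec_last {N : ℕ} (r0 : ℝ) (ξ : ℕ → ℕ → ℝ) (x : Fin (2 ^ N) → ℝ)
    (i : Fin (2 ^ N)) (h : ¬ (i.1 + 1 < 2 ^ N)) :
    (MN N r0 ξ).mulVec x i = ∑ j, x j := by
  simp [Matrix.mulVec, dotProduct, MN, dif_neg h]

lemma bN_row {N : ℕ} (p : Fin (2 ^ N) → ℝ) (Φ : ℝ) (i : Fin (2 ^ N)) (h : i.1 + 1 < 2 ^ N) :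
    bN N p Φ i = p ⟨i.1 + 1, h⟩ - p i := by
  simp only [bN, dif_pos h, dotProduct_sub, dotProduct_single, mul_one]
  ring

lemma bN_last {N : ℕ} (p : Fin (2 ^ N) → ℝ) (Φ : ℝ) (i : Fin (2 ^ N))
    (h : ¬ (i.1 + 1 < 2 ^ N)) : bN N p Φ i = Φ := by
  simp [bN, dif_neg h]

lemma fin_chain {n : ℕ} (f : Fin n → ℝ)
    (h : ∀ i : Fin n, ∀ hi : i.1 + 1 < n, f i = f ⟨i.1 + 1, hi⟩) (i j : Fin n) :
    f i = f j := by
  have hn : 0 < n := i.pos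
  have key : ∀ k (hk : k < n), f ⟨k, hk⟩ = f ⟨0, hn⟩ := by
    intro k
    induction k with
    | zero => intro _; rfl
    | succ m ih =>
      intro hk
      have hm : m < n := Nat.lt_of_succ_lt hk
      rw [← h ⟨m, hm⟩ hk, ih hm]
  rw [show i = ⟨i.1, i.2⟩ from rfl, show j = ⟨j.1, j.2⟩ from rfl, key i.1 i.2, key j.1 j.2]

-- the single outlet at level N
lemma Qf_levelN {N : ℕ} (x : Fin (2 ^ N) → ℝ) (i : Fin (2 ^ N)) :
    Qf N N x (beta N N i.1) = x i := by
  rw [Qf]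
  have : Finset.univ.filter (fun j : Fin (2 ^ N) => beta N N j.1 = beta N N i.1) = {i} := by
    ext j
    simp only [Finset.mem_filter, Finset.mem_univ, true_and, Finset.mem_singleton, beta,
      Nat.sub_self, pow_zero, Nat.div_one]
    constructor
    · intro h; exact Fin.ext (by omega)
    · intro h; rw [h]
  rw [this, Finset.sum_singleton]

lemma pow_pos' (N : ℕ) : 0 < 2 ^ N := Nat.pow_pos (by norm_num)

lemma lastIdx_spec (N : ℕ) : ¬ ((2 ^ N - 1) + 1 < 2 ^ N) := by
  have := pow_pos' N; omega

/-- nonneg of the energy terms -/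
lemma term_nonneg {N : ℕ} (ξ : ℕ → ℕ → ℝ)
    (hξ : ∀ k ∈ Finset.Icc 1 N, ∀ l ∈ Finset.Icc 1 (2 ^ k), 0 < ξ k l)
    (x : Fin (2 ^ N) → ℝ) :
    ∀ k ∈ Finset.Icc 1 N, ∀ l ∈ Finset.Icc 1 (2 ^ k),
      0 ≤ (1 / ξ k l) * (Qf N k x l) ^ 2 := by
  intro k hk l hl
  have := hξ k hk l hl
  positivity

lemma MN_det_ne_zero {N : ℕ} (r0 : ℝ) (ξ : ℕ → ℕ → ℝ) (hN : 1 ≤ N) (hr0 : 0 < r0)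
    (hξ : ∀ k ∈ Finset.Icc 1 N, ∀ l ∈ Finset.Icc 1 (2 ^ k), 0 < ξ k l) :
    (MN N r0 ξ).det ≠ 0 := by
  intro hdet
  obtain ⟨v, hv0, hv⟩ := (Matrix.exists_mulVec_eq_zero_iff).mpr hdet
  have hlast : (∑ j, v j) = 0 := by
    have h := congrFun hv ⟨2 ^ N - 1, by have := pow_pos' N; omega⟩
    rwa [MN_mulVec_last r0 ξ v _ (lastIdx_spec N)] at h
  have hconst : ∀ i j, (AN N r0 ξ).mulVec v i = (AN N r0 ξ).mulVec v j := by
    apply fin_chain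
    intro i hi
    have h := congrFun hv i
    rw [MN_mulVec_row r0 ξ v i hi] at h
    have h0 : (0 : Fin (2 ^ N) → ℝ) i = 0 := rfl
    rw [h0] at h
    linarith
  have henergy : v ⬝ᵥ (AN N r0 ξ).mulVec v = 0 := by
    have : ∀ i, (AN N r0 ξ).mulVec v i = (AN N r0 ξ).mulVec v ⟨2 ^ N - 1, by have := pow_pos' N; omega⟩ :=
      fun i => hconst i _
    calc v ⬝ᵥ (AN N r0 ξ).mulVec v
        = ∑ i, v i * (AN N r0 ξ).mulVec v ⟨2 ^ N - 1, by have := pow_pos' N; omega⟩ := by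
          refine Finset.sum_congr rfl fun i _ => by rw [this i]
      _ = (∑ i, v i) * _ := by rw [Finset.sum_mul]
      _ = 0 := by rw [hlast, zero_mul]
  rw [energy_identity, hlast] at henergy
  have hsum0 : ∑ k ∈ Finset.Icc 1 N, ∑ l ∈ Finset.Icc 1 (2 ^ k),
      (1 / ξ k l) * (Qf N k v l) ^ 2 = 0 := by
    have h' := henergy
    rw [show (0:ℝ) ^ 2 = 0 from by norm_num, zero_add] at h'
    exact (mul_eq_zero.mp h').resolve_left (ne_of_gt hr0)
  have hterm : ∀ k ∈ Finset.Icc 1 N, ∀ l ∈ Finset.Icc 1 (2 ^ k),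
      (1 / ξ k l) * (Qf N k v l) ^ 2 = 0 := by
    intro k hk l hl
    have houter := (Finset.sum_eq_zero_iff_of_nonneg (fun k hk => Finset.sum_nonneg
      (fun l hl => term_nonneg ξ hξ v k hk l hl))).mp hsum0 k hk
    exact (Finset.sum_eq_zero_iff_of_nonneg
      (fun l hl => term_nonneg ξ hξ v k hk l hl)).mp houter l hl
  apply hv0
  funext i
  have hb := beta_mem (le_refl N) i
  have h := hterm N (Finset.mem_Icc.mpr ⟨hN, le_refl N⟩) _ hb
  rw [Qf_levelN] at h
  have hξpos := hξ N (Finset.mem_Icc.mpr ⟨hN, le_refl N⟩) _ hb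
  have : (v i) ^ 2 = 0 := by
    have h1 : 1 / ξ N (beta N N i.1) ≠ 0 := by positivity
    exact (mul_eq_zero.mp h).resolve_left h1
  simpa using pow_eq_zero_iff (n := 2) (by norm_num) |>.mp this

section Qfacts
variable {N : ℕ} (r0 Φ : ℝ) (ξ : ℕ → ℕ → ℝ) (p : Fin (2 ^ N) → ℝ)
variable (hN : 1 ≤ N) (hr0 : 0 < r0)
variable (hξ : ∀ k ∈ Finset.Icc 1 N, ∀ l ∈ Finset.Icc 1 (2 ^ k), 0 < ξ k l)
include hN hr0 hξ

omit hN hr0 hξ in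
noncomputable def qflow : Fin (2 ^ N) → ℝ := (MN N r0 ξ)⁻¹.mulVec (bN N p Φ)

lemma Mq_eq_b : (MN N r0 ξ).mulVec (qflow r0 Φ ξ p) = bN N p Φ := by
  rw [qflow, Matrix.mulVec_mulVec,
    Matrix.mul_nonsing_inv _ (isUnit_iff_ne_zero.mpr (MN_det_ne_zero r0 ξ hN hr0 hξ)),
    Matrix.one_mulVec]

lemma qflow_sum : ∑ j, qflow r0 Φ ξ p j = Φ := by
  have h := congrFun (Mq_eq_b r0 Φ ξ p hN hr0 hξ) ⟨2 ^ N - 1, by have := pow_pos' N; omega⟩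
  rwa [MN_mulVec_last r0 ξ _ _ (lastIdx_spec N), bN_last _ _ _ (lastIdx_spec N)] at h

lemma qflow_pressure : ∀ i j : Fin (2 ^ N),
    (AN N r0 ξ).mulVec (qflow r0 Φ ξ p) i + p i
      = (AN N r0 ξ).mulVec (qflow r0 Φ ξ p) j + p j := by
  apply fin_chain (fun i => (AN N r0 ξ).mulVec (qflow r0 Φ ξ p) i + p i)
  intro i hi
  have h := congrFun (Mq_eq_b r0 Φ ξ p hN hr0 hξ) i
  rw [MN_mulVec_row r0 ξ _ i hi, bN_row p Φ i hi] at h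
  show (AN N r0 ξ).mulVec (qflow r0 Φ ξ p) i + p i = _
  linarith

/-- Thomson-type minimality: the Poiseuille flow minimizes `yᵀAy + 2p·y`. -/
lemma qflow_min (y : Fin (2 ^ N) → ℝ) (hy : ∑ j, y j = Φ) :
    qflow r0 Φ ξ p ⬝ᵥ (AN N r0 ξ).mulVec (qflow r0 Φ ξ p) ≤
      y ⬝ᵥ (AN N r0 ξ).mulVec y + 2 * (p ⬝ᵥ y) - 2 * (p ⬝ᵥ (qflow r0 Φ ξ p)) := by
  set q := qflow r0 Φ ξ p with hq
  set A := AN N r0 ξ with hA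
  set d : Fin (2 ^ N) → ℝ := y - q with hd
  have hdsum : ∑ j, d j = 0 := by
    simp only [hd, Pi.sub_apply, Finset.sum_sub_distrib, hy,
      qflow_sum r0 Φ ξ p hN hr0 hξ, sub_self]
    rw [hq, qflow_sum r0 Φ ξ p hN hr0 hξ, sub_self]
  have hdAd : 0 ≤ d ⬝ᵥ A.mulVec d := by
    rw [hA, energy_identity, hdsum]
    have h1 : 0 ≤ ∑ k ∈ Finset.Icc 1 N, ∑ l ∈ Finset.Icc 1 (2 ^ k),
        (1 / ξ k l) * (Qf N k d l) ^ 2 :=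
      Finset.sum_nonneg fun k hk => Finset.sum_nonneg fun l hl => term_nonneg ξ hξ d k hk l hl
    nlinarith
  have hy' : y = q + d := by simp [hd]
  have hexp : y ⬝ᵥ A.mulVec y =
      q ⬝ᵥ A.mulVec q + 2 * (d ⬝ᵥ A.mulVec q) + d ⬝ᵥ A.mulVec d := by
    rw [hy', Matrix.mulVec_add, add_dotProduct, dotProduct_add,
      dotProduct_add]
    have : q ⬝ᵥ A.mulVec d = d ⬝ᵥ A.mulVec q := dot_mulVec_symm r0 ξ q d
    rw [this]; ring
  -- d ⬝ᵥ A q = ∑ d i (A q) i = ∑ d i (c - p i) = -(p ⬝ᵥ d)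
  have hdAq : d ⬝ᵥ A.mulVec q = - (p ⬝ᵥ d) := by
    set c := A.mulVec q ⟨2 ^ N - 1, by have := pow_pos' N; omega⟩ +
      p ⟨2 ^ N - 1, by have := pow_pos' N; omega⟩ with hc
    have hAq : ∀ i, A.mulVec q i = c - p i := by
      intro i
      have := qflow_pressure r0 Φ ξ p hN hr0 hξ i ⟨2 ^ N - 1, by have := pow_pos' N; omega⟩
      rw [hc]; linarith
    calc d ⬝ᵥ A.mulVec q = ∑ i, d i * (c - p i) := by
          exact Finset.sum_congr rfl fun i _ => by rw [hAq i]
      _ = c * (∑ i, d i) - ∑ i, p i * d i := by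
          rw [Finset.mul_sum, ← Finset.sum_sub_distrib]
          exact Finset.sum_congr rfl fun i _ => by ring
      _ = - (p ⬝ᵥ d) := by rw [hdsum, mul_zero, zero_sub, dotProduct]
  have hpd : p ⬝ᵥ d = p ⬝ᵥ y - p ⬝ᵥ q := by
    simp [hd, dotProduct, mul_sub, Finset.sum_sub_distrib]
  rw [hexp, hdAq, hpd]
  linarith
end Qfacts

/-- general completing-the-square identity -/
lemma sos_gen {α : Type*} (s : Finset α) (w Q : α → ℝ) (hw : ∀ a ∈ s, w a ≠ 0) (lam : ℝ) :
    ∑ a ∈ s, w a * (Q a / w a - lam) ^ 2 =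
      (∑ a ∈ s, (1 / w a) * (Q a) ^ 2) - 2 * lam * (∑ a ∈ s, Q a)
        + lam ^ 2 * (∑ a ∈ s, w a) := by
  rw [Finset.mul_sum, Finset.mul_sum, ← Finset.sum_sub_distrib, ← Finset.sum_add_distrib]
  refine Finset.sum_congr rfl fun a ha => ?_
  have hwa := hw a ha
  field_simp
  ring

section Decomp
variable {N : ℕ} {Λ r0 Φ : ℝ} {ξ : ℕ → ℕ → ℝ} {p : Fin (2 ^ N) → ℝ}
variable (hN : 1 ≤ N) (hr0 : 0 < r0) (hΦ : 0 < Φ) (hΛ : 1 < Λ)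
variable (hξ : ∀ k ∈ Finset.Icc 1 N, ∀ l ∈ Finset.Icc 1 (2 ^ k), 0 < ξ k l)
variable (hvol : ∑ k ∈ Finset.Icc 1 N, ∑ l ∈ Finset.Icc 1 (2 ^ k), ξ k l = Λ - 1)
include hN hr0 hΦ hΛ hξ hvol

lemma key_decomp :
    r0 * Φ ^ 2 * (1 + (N : ℝ) ^ 2 / (Λ - 1)) ≤
        qflow r0 Φ ξ p ⬝ᵥ (AN N r0 ξ).mulVec (qflow r0 Φ ξ p) ∧
      (qflow r0 Φ ξ p ⬝ᵥ (AN N r0 ξ).mulVec (qflow r0 Φ ξ p) =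
          r0 * Φ ^ 2 * (1 + (N : ℝ) ^ 2 / (Λ - 1)) →
        ∀ k ∈ Finset.Icc 1 N, ∀ l ∈ Finset.Icc 1 (2 ^ k),
          Qf N k (qflow r0 Φ ξ p) l
            = ξ k l * (Φ / (∑ l' ∈ Finset.Icc 1 (2 ^ k), ξ k l'))) := by
  set q := qflow r0 Φ ξ p with hq
  set s : ℕ → ℝ := fun k => ∑ l ∈ Finset.Icc 1 (2 ^ k), ξ k l with hsdef
  have hspos : ∀ k ∈ Finset.Icc 1 N, 0 < s k := by
    intro k hk
    refine Finset.sum_pos (fun l hl => hξ k hk l hl) ?_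
    exact ⟨1, Finset.mem_Icc.mpr ⟨le_refl 1, Nat.one_le_two_pow⟩⟩
  have hssum : ∑ k ∈ Finset.Icc 1 N, s k = Λ - 1 := hvol
  have hΛpos : 0 < Λ - 1 := by linarith
  have hQsum : ∀ k ∈ Finset.Icc 1 N, ∑ l ∈ Finset.Icc 1 (2 ^ k), Qf N k q l = Φ := by
    intro k hk
    have := fiber_sum (N := N) (k := k) (Finset.mem_Icc.mp hk).2 (fun _ => 1) q
    simp only [one_mul] at this
    rw [← this, qflow_sum r0 Φ ξ p hN hr0 hξ]
  -- per-level sum of squares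
  have hR1 : ∀ k ∈ Finset.Icc 1 N,
      ∑ l ∈ Finset.Icc 1 (2 ^ k), (1 / ξ k l) * (Qf N k q l) ^ 2
        = Φ ^ 2 / s k + ∑ l ∈ Finset.Icc 1 (2 ^ k),
            ξ k l * (Qf N k q l / ξ k l - Φ / s k) ^ 2 := by
    intro k hk
    rw [sos_gen _ _ _ (fun l hl => ne_of_gt (hξ k hk l hl)) (Φ / s k), hQsum k hk]
    have hsk := hspos k hk
    field_simp
    ring
  have hR1nonneg : ∀ k ∈ Finset.Icc 1 N, 0 ≤ ∑ l ∈ Finset.Icc 1 (2 ^ k),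
      ξ k l * (Qf N k q l / ξ k l - Φ / s k) ^ 2 := by
    intro k hk
    exact Finset.sum_nonneg fun l hl => mul_nonneg (hξ k hk l hl).le (sq_nonneg _)
  -- level sums
  have hcard : ((Finset.Icc 1 N).card : ℝ) = N := by
    rw [Nat.card_Icc]; simp
  have hR2 : ∑ k ∈ Finset.Icc 1 N, 1 / s k
      = (N : ℝ) ^ 2 / (Λ - 1) + ∑ k ∈ Finset.Icc 1 N, s k * (1 / s k - N / (Λ - 1)) ^ 2 := by
    have := sos_gen (Finset.Icc 1 N) s (fun _ => 1)
      (fun k hk => ne_of_gt (hspos k hk)) ((N : ℝ) / (Λ - 1))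
    rw [hssum] at this
    simp only [one_pow, mul_one, Finset.sum_const, nsmul_eq_mul, hcard] at this
    have hΛne : Λ - 1 ≠ 0 := by linarith
    have h1 : ((N : ℝ) / (Λ - 1)) ^ 2 * (Λ - 1) = (N : ℝ) ^ 2 / (Λ - 1) := by
      field_simp
    have h2 : 2 * ((N : ℝ) / (Λ - 1)) * (N : ℝ) = 2 * ((N : ℝ) ^ 2 / (Λ - 1)) := by
      field_simp
    linarith
  have hR2nonneg : 0 ≤ ∑ k ∈ Finset.Icc 1 N, s k * (1 / s k - N / (Λ - 1)) ^ 2 :=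
    Finset.sum_nonneg fun k hk => mul_nonneg (hspos k hk).le (sq_nonneg _)
  -- energy expansion
  have hE : q ⬝ᵥ (AN N r0 ξ).mulVec q
      = r0 * Φ ^ 2 * (1 + (N : ℝ) ^ 2 / (Λ - 1))
        + r0 * Φ ^ 2 * (∑ k ∈ Finset.Icc 1 N, s k * (1 / s k - N / (Λ - 1)) ^ 2)
        + r0 * ∑ k ∈ Finset.Icc 1 N, ∑ l ∈ Finset.Icc 1 (2 ^ k),
            ξ k l * (Qf N k q l / ξ k l - Φ / s k) ^ 2 := by
    rw [energy_identity, hq, qflow_sum r0 Φ ξ p hN hr0 hξ, ← hq]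
    rw [Finset.sum_congr rfl hR1, Finset.sum_add_distrib]
    have : ∑ k ∈ Finset.Icc 1 N, Φ ^ 2 / s k
        = Φ ^ 2 * ∑ k ∈ Finset.Icc 1 N, 1 / s k := by
      rw [Finset.mul_sum]
      exact Finset.sum_congr rfl fun k _ => by ring
    rw [this, hR2]
    ring
  constructor
  · rw [hE]
    have h3 : 0 ≤ ∑ k ∈ Finset.Icc 1 N, ∑ l ∈ Finset.Icc 1 (2 ^ k),
        ξ k l * (Qf N k q l / ξ k l - Φ / s k) ^ 2 :=
      Finset.sum_nonneg hR1nonneg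
    have ha : 0 ≤ r0 * Φ ^ 2 * (∑ k ∈ Finset.Icc 1 N, s k * (1 / s k - N / (Λ - 1)) ^ 2) :=
      mul_nonneg (mul_nonneg hr0.le (sq_nonneg Φ)) hR2nonneg
    have hb : 0 ≤ r0 * ∑ k ∈ Finset.Icc 1 N, ∑ l ∈ Finset.Icc 1 (2 ^ k),
        ξ k l * (Qf N k q l / ξ k l - Φ / s k) ^ 2 := mul_nonneg hr0.le h3
    linarith
  · intro heq k hk l hl
    rw [hE] at heq
    have h3 : 0 ≤ ∑ k ∈ Finset.Icc 1 N, ∑ l ∈ Finset.Icc 1 (2 ^ k),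
        ξ k l * (Qf N k q l / ξ k l - Φ / s k) ^ 2 :=
      Finset.sum_nonneg hR1nonneg
    have hz : ∑ k ∈ Finset.Icc 1 N, ∑ l ∈ Finset.Icc 1 (2 ^ k),
        ξ k l * (Qf N k q l / ξ k l - Φ / s k) ^ 2 = 0 := by
      have ha : 0 ≤ r0 * Φ ^ 2 * (∑ k ∈ Finset.Icc 1 N, s k * (1 / s k - N / (Λ - 1)) ^ 2) :=
        mul_nonneg (mul_nonneg hr0.le (sq_nonneg Φ)) hR2nonneg
      have hb : r0 * (∑ k ∈ Finset.Icc 1 N, ∑ l ∈ Finset.Icc 1 (2 ^ k),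
          ξ k l * (Qf N k q l / ξ k l - Φ / s k) ^ 2) = 0 := by
        have hb1 : 0 ≤ r0 * ∑ k ∈ Finset.Icc 1 N, ∑ l ∈ Finset.Icc 1 (2 ^ k),
            ξ k l * (Qf N k q l / ξ k l - Φ / s k) ^ 2 := mul_nonneg hr0.le h3
        linarith
      exact (mul_eq_zero.mp hb).resolve_left (ne_of_gt hr0)
    have hterm := (Finset.sum_eq_zero_iff_of_nonneg hR1nonneg).mp hz k hk
    have hterm2 := (Finset.sum_eq_zero_iff_of_nonneg
      (fun l hl => mul_nonneg (hξ k hk l hl).le (sq_nonneg _) : ∀ l ∈ Finset.Icc 1 (2 ^ k),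
        (0:ℝ) ≤ ξ k l * (Qf N k q l / ξ k l - Φ / s k) ^ 2)).mp hterm l hl
    have hξkl := hξ k hk l hl
    have hsq : (Qf N k q l / ξ k l - Φ / s k) ^ 2 = 0 := by
      rcases mul_eq_zero.mp hterm2 with h | h
      · exact absurd h (ne_of_gt hξkl)
      · exact h
    have hdiff : Qf N k q l / ξ k l - Φ / s k = 0 := by
      have := pow_eq_zero_iff (n := 2) (by norm_num) |>.mp hsq
      exact this
    have hQξ : Qf N k q l / ξ k l = Φ / s k := by linarith
    have : ξ k l * (Qf N k q l / ξ k l) = Qf N k q l := by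
      field_simp
    rw [← hQξ, this]
end Decomp

section NoAttain
variable {N : ℕ} {Λ r0 Φ : ℝ} {ξ : ℕ → ℕ → ℝ} {p : Fin (2 ^ N) → ℝ}
variable (hN : 1 ≤ N) (hr0 : 0 < r0) (hΦ : 0 < Φ) (hΛ : 1 < Λ)
variable (hξ : ∀ k ∈ Finset.Icc 1 N, ∀ l ∈ Finset.Icc 1 (2 ^ k), 0 < ξ k l)
variable (hvol : ∑ k ∈ Finset.Icc 1 N, ∑ l ∈ Finset.Icc 1 (2 ^ k), ξ k l = Λ - 1)
include hN hr0 hΦ hΛ hξ hvol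

lemma no_attain
    (hp : ∃ j : Fin (2 ^ N), ∃ h : j.1 + 1 < 2 ^ N, p j ≠ p ⟨j.1 + 1, h⟩) :
    qflow r0 Φ ξ p ⬝ᵥ (AN N r0 ξ).mulVec (qflow r0 Φ ξ p) ≠
      r0 * Φ ^ 2 * (1 + (N : ℝ) ^ 2 / (Λ - 1)) := by
  intro heq
  obtain ⟨j, hj, hpj⟩ := hp
  have hQ := (key_decomp (p := p) hN hr0 hΦ hΛ hξ hvol).2 heq
  set q := qflow r0 Φ ξ p with hq
  -- the outlet pressures are all equal: contradiction
  have hrow : ∀ i : Fin (2 ^ N), (AN N r0 ξ).mulVec q i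
      = r0 * (Φ + ∑ k ∈ Finset.Icc 1 N, Φ / (∑ l' ∈ Finset.Icc 1 (2 ^ k), ξ k l')) := by
    intro i
    rw [AN_mulVec, hq, qflow_sum r0 Φ ξ p hN hr0 hξ, ← hq]
    congr 1
    congr 1
    refine Finset.sum_congr rfl fun k hk => ?_
    have hb := beta_mem (Finset.mem_Icc.mp hk).2 i
    rw [hQ k hk _ hb]
    have hξk := hξ k hk _ hb
    field_simp
  have hpij := qflow_pressure r0 Φ ξ p hN hr0 hξ j ⟨j.1 + 1, hj⟩
  rw [hrow j, hrow ⟨j.1 + 1, hj⟩] at hpij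
  exact hpj (by linarith)
end NoAttain

section Construct
variable {N : ℕ} {Λ r0 Φ : ℝ} {p : Fin (2 ^ N) → ℝ}

/-- the concentrated geometry -/
noncomputable def xiC (a ε : ℝ) : ℕ → ℕ → ℝ := fun _ l => if l = 1 then a else ε

lemma xiC_pos {a ε : ℝ} (ha : 0 < a) (hε : 0 < ε) :
    ∀ k ∈ Finset.Icc 1 N, ∀ l ∈ Finset.Icc 1 (2 ^ k), 0 < xiC a ε k l := by
  intro k _ l _
  unfold xiC
  split <;> assumption

lemma sum_geo : ∀ n : ℕ, ∑ k ∈ Finset.Icc 1 n, (2 : ℝ) ^ k = 2 ^ (n + 1) - 2 := by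
  intro n
  induction n with
  | zero => simp
  | succ m ih =>
    rw [Finset.sum_Icc_succ_top (Nat.succ_le_succ (Nat.zero_le m)), ih]
    ring

lemma xiC_vol (a ε : ℝ) :
    ∑ k ∈ Finset.Icc 1 N, ∑ l ∈ Finset.Icc 1 (2 ^ k), xiC a ε k l
      = N * a + ((2 : ℝ) ^ (N + 1) - 2 - N) * ε := by
  have hinner : ∀ k : ℕ, ∑ l ∈ Finset.Icc 1 (2 ^ k), xiC a ε k l
      = a + ((2 : ℝ) ^ k - 1) * ε := by
    intro k
    have : ∀ l ∈ Finset.Icc 1 (2 ^ k), xiC a ε k l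
        = ε + (if l = 1 then a - ε else 0) := by
      intro l _
      unfold xiC
      split <;> ring
    rw [Finset.sum_congr rfl this, Finset.sum_add_distrib, Finset.sum_const,
      Finset.sum_ite_eq' (Finset.Icc 1 (2 ^ k)) 1 (fun _ => a - ε),
      if_pos (Finset.mem_Icc.mpr ⟨le_refl 1, Nat.one_le_two_pow⟩), Nat.card_Icc]
    push_cast [Nat.add_sub_cancel]
    ring
  rw [Finset.sum_congr rfl (fun k _ => hinner k), Finset.sum_add_distrib,
    Finset.sum_const, Nat.card_Icc,
    Finset.sum_congr rfl (fun (k : ℕ) (_ : k ∈ Finset.Icc 1 N) =>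
      (sub_mul ((2:ℝ) ^ k) 1 ε : ((2:ℝ) ^ k - 1) * ε = 2 ^ k * ε - 1 * ε)),
    Finset.sum_sub_distrib, ← Finset.sum_mul, sum_geo, Finset.sum_const, Nat.card_Icc]
  push_cast [Nat.add_sub_cancel]
  ring

lemma xiC_mono {a ε : ℝ} (hεa : ε ≤ a) :
    ∀ i ∈ Finset.Icc 1 (N - 1), ∀ j ∈ Finset.Icc 1 (2 ^ i),
      max (xiC a ε (i + 1) (2 * j - 1)) (xiC a ε (i + 1) (2 * j)) ≤ xiC a ε i j := by
  intro i _ j hj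
  have hj1 : 1 ≤ j := (Finset.mem_Icc.mp hj).1
  unfold xiC
  rcases eq_or_ne j 1 with h | h
  · subst h
    norm_num
    exact hεa
  · have h1 : ¬ (2 * j - 1 = 1) := by omega
    have h2 : ¬ (2 * j = 1) := by omega
    rw [if_neg h1, if_neg h2, if_neg h, max_self]
end Construct

section Upper
variable {N : ℕ} {Λ r0 Φ : ℝ} {p : Fin (2 ^ N) → ℝ}
variable (hN : 1 ≤ N) (hr0 : 0 < r0) (hΦ : 0 < Φ)
include hN hr0 hΦ

lemma E_upper {a ε : ℝ} (hε : 0 < ε) (hεa : ε ≤ a) :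
    qflow r0 Φ (xiC a ε) p ⬝ᵥ (AN N r0 (xiC a ε)).mulVec (qflow r0 Φ (xiC a ε) p)
      ≤ (Real.sqrt (r0 * Φ ^ 2 * (1 + N / a))
          + (∑ i, 2 * |p i - p ⟨0, pow_pos' N⟩|) * Real.sqrt (ε / r0)) ^ 2 := by
  have ha : 0 < a := lt_of_lt_of_le hε hεa
  set ξ : ℕ → ℕ → ℝ := xiC a ε with hξdef
  have hξ : ∀ k ∈ Finset.Icc 1 N, ∀ l ∈ Finset.Icc 1 (2 ^ k), 0 < ξ k l := xiC_pos ha hε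
  set q := qflow r0 Φ ξ p with hq
  set E := q ⬝ᵥ (AN N r0 ξ).mulVec q with hE
  set z : Fin (2 ^ N) := ⟨0, pow_pos' N⟩ with hz
  set K := ∑ i, 2 * |p i - p z| with hK
  have hK0 : 0 ≤ K := Finset.sum_nonneg fun i _ => by positivity
  -- energy is nonnegative, and dominates each outlet flow
  have hqs : ∑ j, q j = Φ := qflow_sum r0 Φ ξ p hN hr0 hξ
  have hEdecomp := energy_identity r0 ξ q
  rw [← hE, hqs] at hEdecomp
  have hT0 : 0 ≤ ∑ k ∈ Finset.Icc 1 N, ∑ l ∈ Finset.Icc 1 (2 ^ k),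
      (1 / ξ k l) * (Qf N k q l) ^ 2 :=
    Finset.sum_nonneg fun k hk => Finset.sum_nonneg fun l hl => term_nonneg ξ hξ q k hk l hl
  have hE0 : 0 ≤ E := by rw [hEdecomp]; positivity
  have hqi : ∀ i : Fin (2 ^ N), i ≠ z → (q i) ^ 2 ≤ ε * E / r0 := by
    intro i hi
    have hbQ : Qf N N q (beta N N i.1) = q i := Qf_levelN q i
    have hbm : beta N N i.1 ∈ Finset.Icc 1 (2 ^ N) := beta_mem (le_refl N) i
    have hξN : ξ N (beta N N i.1) = ε := by
      have : beta N N i.1 ≠ 1 := by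
        simp only [beta, Nat.sub_self, pow_zero, Nat.div_one]
        intro h
        refine hi (Fin.ext ?_)
        show i.1 = 0
        omega
      simp only [hξdef, xiC, if_neg this]
    have hsingle : (1 / ξ N (beta N N i.1)) * (Qf N N q (beta N N i.1)) ^ 2
        ≤ ∑ k ∈ Finset.Icc 1 N, ∑ l ∈ Finset.Icc 1 (2 ^ k),
          (1 / ξ k l) * (Qf N k q l) ^ 2 := by
      refine le_trans (Finset.single_le_sum
        (fun l hl => term_nonneg ξ hξ q N (Finset.mem_Icc.mpr ⟨hN, le_refl N⟩) l hl) hbm) ?_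
      exact Finset.single_le_sum (f := fun k => ∑ l ∈ Finset.Icc 1 (2 ^ k),
          (1 / ξ k l) * (Qf N k q l) ^ 2)
        (fun k hk => Finset.sum_nonneg fun l hl => term_nonneg ξ hξ q k hk l hl)
        (Finset.mem_Icc.mpr ⟨hN, le_refl N⟩)
    rw [hbQ, hξN] at hsingle
    have hEge : r0 * ((1 / ε) * (q i) ^ 2) ≤ E := by
      rw [hEdecomp]
      have h1 : 0 ≤ Φ ^ 2 := sq_nonneg Φ
      nlinarith
    have : (1 / ε) * (q i) ^ 2 ≤ E / r0 := by
      rw [le_div_iff₀ hr0]; nlinarith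
    calc (q i) ^ 2 = ε * ((1 / ε) * (q i) ^ 2) := by field_simp
      _ ≤ ε * (E / r0) := by
          apply mul_le_mul_of_nonneg_left this hε.le
      _ = ε * E / r0 := by ring
  -- Thomson bound with test flow concentrated on outlet 0
  set y : Fin (2 ^ N) → ℝ := Pi.single z Φ with hy
  have hysum : ∑ j, y j = Φ := by
    rw [hy]
    simp [Pi.single_apply]
  have hmin : E ≤ y ⬝ᵥ (AN N r0 ξ).mulVec y + 2 * (p ⬝ᵥ y) - 2 * (p ⬝ᵥ q) :=
    qflow_min r0 Φ ξ p hN hr0 hξ y hysum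
  have hyAy : y ⬝ᵥ (AN N r0 ξ).mulVec y = r0 * Φ ^ 2 * (1 + N / a) := by
    have hA00 : AN N r0 ξ z z = r0 * (1 + N / a) := by
      unfold AN
      have hnu : nuIdx z.1 z.1 = 0 := Nat.sInf_eq_zero.mpr (Or.inl (fun l _ => rfl))
      rw [hnu, Nat.sub_zero]
      congr 1
      congr 1
      have : ∀ k ∈ Finset.Icc 1 N, 1 / ξ k ((z.1) / 2 ^ (N - k) + 1) = 1 / a := by
        intro k _
        have : z.1 / 2 ^ (N - k) + 1 = 1 := by simp [hz]
        rw [this]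
        simp [hξdef, xiC]
      rw [Finset.sum_congr rfl this, Finset.sum_const, Nat.card_Icc]
      push_cast [Nat.add_sub_cancel]
      ring
    rw [hy, Matrix.mulVec_single, single_dotProduct, Pi.smul_apply, Matrix.col_apply, op_smul_eq_mul, hA00]
    ring
  have hpy : p ⬝ᵥ y = p z * Φ := by
    rw [hy, dotProduct_single]
  -- the flow to outlets other than 0 is small
  have hpq : p z * Φ - p ⬝ᵥ q = - ∑ i ∈ Finset.univ.erase z, (p i - p z) * q i := by
    have h1 : p ⬝ᵥ q = ∑ i, ((p i - p z) * q i + p z * q i) := by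
      rw [dotProduct]
      exact Finset.sum_congr rfl fun i _ => by ring
    rw [h1, Finset.sum_add_distrib, ← Finset.mul_sum, hqs]
    rw [← Finset.add_sum_erase _ _ (Finset.mem_univ z), sub_self, zero_mul, zero_add]
    ring
  have habs : ∀ i ∈ Finset.univ.erase z,
      - 2 * ((p i - p z) * q i) ≤ 2 * |p i - p z| * Real.sqrt (ε * E / r0) := by
    intro i hi
    have hine := hqi i (Finset.ne_of_mem_erase hi)
    have h1 : |q i| ≤ Real.sqrt (ε * E / r0) := by
      rw [← Real.sqrt_sq_eq_abs]
      exact Real.sqrt_le_sqrt hine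
    calc - 2 * ((p i - p z) * q i) ≤ 2 * (|p i - p z| * |q i|) := by
          rw [← abs_mul]
          have := neg_abs_le ((p i - p z) * q i)
          linarith
      _ ≤ 2 * (|p i - p z| * Real.sqrt (ε * E / r0)) :=
          mul_le_mul_of_nonneg_left (mul_le_mul_of_nonneg_left h1 (abs_nonneg _)) (by norm_num)
      _ = 2 * |p i - p z| * Real.sqrt (ε * E / r0) := by ring
  have hEB : E ≤ r0 * Φ ^ 2 * (1 + N / a) + K * Real.sqrt (ε / r0) * Real.sqrt E := by
    have hsplit : Real.sqrt (ε * E / r0) = Real.sqrt (ε / r0) * Real.sqrt E := by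
      rw [← Real.sqrt_mul (by positivity)]
      congr 1
      ring
    have hsumabs : - 2 * ∑ i ∈ Finset.univ.erase z, (p i - p z) * q i
        ≤ K * Real.sqrt (ε * E / r0) := by
      rw [Finset.mul_sum, hK]
      have : ∑ i ∈ Finset.univ.erase z, 2 * |p i - p z| * Real.sqrt (ε * E / r0)
          ≤ ∑ i, 2 * |p i - p z| * Real.sqrt (ε * E / r0) := by
        apply Finset.sum_le_sum_of_subset_of_nonneg (Finset.erase_subset _ _)
        intro i _ _
        positivity
      calc ∑ i ∈ Finset.univ.erase z, (- 2) * ((p i - p z) * q i)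
          ≤ ∑ i ∈ Finset.univ.erase z, 2 * |p i - p z| * Real.sqrt (ε * E / r0) :=
            Finset.sum_le_sum fun i hi => habs i hi
        _ ≤ ∑ i, 2 * |p i - p z| * Real.sqrt (ε * E / r0) := this
        _ = (∑ i, 2 * |p i - p z|) * Real.sqrt (ε * E / r0) := by
            rw [Finset.sum_mul]
      -- fix shape
    calc E ≤ y ⬝ᵥ (AN N r0 ξ).mulVec y + 2 * (p ⬝ᵥ y) - 2 * (p ⬝ᵥ q) := hmin
      _ = r0 * Φ ^ 2 * (1 + N / a) + 2 * (p z * Φ - p ⬝ᵥ q) := by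
          rw [hyAy, hpy]; ring
      _ = r0 * Φ ^ 2 * (1 + N / a)
          + (- 2 * ∑ i ∈ Finset.univ.erase z, (p i - p z) * q i) := by
          rw [hpq]; ring
      _ ≤ r0 * Φ ^ 2 * (1 + N / a) + K * Real.sqrt (ε * E / r0) := by
          linarith [hsumabs]
      _ = r0 * Φ ^ 2 * (1 + N / a) + K * Real.sqrt (ε / r0) * Real.sqrt E := by
          rw [hsplit]; ring
  -- quadratic absorption
  set B := r0 * Φ ^ 2 * (1 + N / a) with hB
  set D := K * Real.sqrt (ε / r0) with hD
  have hB0 : 0 ≤ B := by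
    have : 0 ≤ (N : ℝ) / a := by positivity
    have h1 : 0 ≤ 1 + (N : ℝ) / a := by linarith
    positivity
  have hD0 : 0 ≤ D := mul_nonneg hK0 (Real.sqrt_nonneg _)
  have hxB : Real.sqrt E ≤ Real.sqrt B + D := by
    by_contra hcon
    push_neg at hcon
    have hx0 : 0 ≤ Real.sqrt E := Real.sqrt_nonneg E
    have hsB : 0 ≤ Real.sqrt B := Real.sqrt_nonneg B
    have h1 : Real.sqrt B ≤ Real.sqrt E := by linarith
    have h2 : Real.sqrt E * Real.sqrt E > (Real.sqrt B + D) * Real.sqrt E :=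
      mul_lt_mul_of_pos_right hcon (by linarith [lt_of_le_of_lt (by linarith : (0:ℝ) ≤ Real.sqrt B + D) hcon])
    have h3 : Real.sqrt E * Real.sqrt E = E := Real.mul_self_sqrt hE0
    have h4 : (Real.sqrt B + D) * Real.sqrt E
        = Real.sqrt B * Real.sqrt E + D * Real.sqrt E := by ring
    have h5 : Real.sqrt B * Real.sqrt B ≤ Real.sqrt B * Real.sqrt E :=
      mul_le_mul_of_nonneg_left h1 hsB
    have h6 : Real.sqrt B * Real.sqrt B = B := Real.mul_self_sqrt hB0
    linarith
  calc E = Real.sqrt E ^ 2 := (Real.sq_sqrt hE0).symm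
    _ ≤ (Real.sqrt B + D) ^ 2 := by
        apply pow_le_pow_left₀ (Real.sqrt_nonneg E) hxB
end Upper

section Exists
variable {N : ℕ} {Λ r0 Φ : ℝ} {p : Fin (2 ^ N) → ℝ}
variable (hN : 1 ≤ N) (hΛ : 1 < Λ) (hr0 : 0 < r0) (hΦ : 0 < Φ)
include hN hΛ hr0 hΦ

lemma exists_low (η : ℝ) (hη : 0 < η) :
    ∃ ξ : ℕ → ℕ → ℝ,
      ((∀ i ∈ Finset.Icc 1 N, ∀ j ∈ Finset.Icc 1 (2 ^ i), 0 < ξ i j) ∧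
        (∑ i ∈ Finset.Icc 1 N, ∑ j ∈ Finset.Icc 1 (2 ^ i), ξ i j = Λ - 1) ∧
        (∀ i ∈ Finset.Icc 1 (N - 1), ∀ j ∈ Finset.Icc 1 (2 ^ i),
          max (ξ (i + 1) (2 * j - 1)) (ξ (i + 1) (2 * j)) ≤ ξ i j)) ∧
      qflow r0 Φ ξ p ⬝ᵥ (AN N r0 ξ).mulVec (qflow r0 Φ ξ p)
        < r0 * Φ ^ 2 * (1 + (N : ℝ) ^ 2 / (Λ - 1)) + η := by
  have hNR : (0 : ℝ) < N := by exact_mod_cast hN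
  have hΛ1 : (0 : ℝ) < Λ - 1 := by linarith
  set C : ℝ := (2 : ℝ) ^ (N + 1) - 2 - N with hC
  set K : ℝ := ∑ i, 2 * |p i - p (⟨0, pow_pos' N⟩ : Fin (2 ^ N))| with hK
  set af : ℝ → ℝ := fun ε => (Λ - 1 - C * ε) / N with haf
  set f : ℝ → ℝ := fun ε =>
    (Real.sqrt (r0 * Φ ^ 2 * (1 + N / af ε)) + K * Real.sqrt (ε / r0)) ^ 2 with hf
  have haf0 : af 0 = (Λ - 1) / N := by simp [haf]
  have haf0pos : 0 < af 0 := by rw [haf0]; positivity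
  have hcaf : Continuous af := by
    apply Continuous.div_const
    exact (continuous_const.sub (continuous_const.mul continuous_id))
  have hcf : ContinuousAt f 0 := by
    apply ContinuousAt.pow
    apply ContinuousAt.add
    · apply Real.continuous_sqrt.continuousAt.comp
      apply ContinuousAt.mul continuousAt_const
      apply ContinuousAt.add continuousAt_const
      exact ContinuousAt.div continuousAt_const hcaf.continuousAt (ne_of_gt haf0pos)
    · exact (continuous_const.mul
        (Real.continuous_sqrt.comp (continuous_id.div_const r0))).continuousAt
  have htarget0 : 0 ≤ r0 * Φ ^ 2 * (1 + (N : ℝ) ^ 2 / (Λ - 1)) := by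
    have h1 : 0 ≤ (N : ℝ) ^ 2 / (Λ - 1) := div_nonneg (sq_nonneg _) hΛ1.le
    have h2 : 0 ≤ 1 + (N : ℝ) ^ 2 / (Λ - 1) := by linarith
    positivity
  have hf0 : f 0 = r0 * Φ ^ 2 * (1 + (N : ℝ) ^ 2 / (Λ - 1)) := by
    rw [hf]
    simp only [haf0, zero_div, Real.sqrt_zero, mul_zero, add_zero]
    have : (N : ℝ) / ((Λ - 1) / N) = (N : ℝ) ^ 2 / (Λ - 1) := by
      rw [div_div_eq_mul_div, sq]
    rw [this, Real.sq_sqrt htarget0]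
  have htf : Filter.Tendsto f (nhdsWithin 0 (Set.Ioi 0)) (nhds (f 0)) :=
    hcf.continuousWithinAt.tendsto
  rw [hf0] at htf
  have hev1 : ∀ᶠ ε in nhdsWithin 0 (Set.Ioi 0),
      f ε < r0 * Φ ^ 2 * (1 + (N : ℝ) ^ 2 / (Λ - 1)) + η :=
    htf.eventually_lt_const (by linarith)
  have hev2 : ∀ᶠ ε in nhdsWithin (0:ℝ) (Set.Ioi 0), ε ∈ Set.Ioi (0:ℝ) :=
    self_mem_nhdsWithin
  have hev3 : ∀ᶠ ε in nhdsWithin (0:ℝ) (Set.Ioi 0), ε < af ε := by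
    have hg : Filter.Tendsto (fun ε => af ε - ε) (nhdsWithin 0 (Set.Ioi 0))
        (nhds (af 0 - 0)) :=
      ((hcaf.sub continuous_id).continuousAt (x := 0)).continuousWithinAt.tendsto
    have : ∀ᶠ ε in nhdsWithin (0:ℝ) (Set.Ioi 0), 0 < af ε - ε :=
      hg.eventually_const_lt (by rw [sub_zero]; exact haf0pos)
    exact this.mono fun ε h => by linarith
  obtain ⟨ε, hfε, hεpos, hεa⟩ := (hev1.and (hev2.and hev3)).exists
  rw [Set.mem_Ioi] at hεpos
  refine ⟨xiC (af ε) ε, ⟨xiC_pos (lt_trans hεpos hεa) hεpos, ?_, xiC_mono hεa.le⟩, ?_⟩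
  · rw [xiC_vol, haf]
    field_simp
    rw [hC]; ring
  · calc qflow r0 Φ (xiC (af ε) ε) p ⬝ᵥ
        (AN N r0 (xiC (af ε) ε)).mulVec (qflow r0 Φ (xiC (af ε) ε) p)
        ≤ f ε := E_upper hN hr0 hΦ hεpos hεa.le
      _ < _ := hfε
end Exists

/-- Problem (P₂): if at least two outlet pressures differ, the infimum of the
dissipated energy `E(ξ) = qᵀ A_N(ξ) q` (with `q = M_N(ξ)⁻¹ b_N` the Poiseuille
flow) over admissible geometries `ξ` (positive, volume `Λ-1`, decreasing along
levels) equals `r₀Φ²(1 + N²/(Λ-1))` and is not attained. -/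
theorem stmt9 (N : ℕ) (hN : 1 ≤ N) (Λ r0 Φ : ℝ) (hΛ : 1 < Λ) (hr0 : 0 < r0)
    (hΦ : 0 < Φ) (p : Fin (2 ^ N) → ℝ)
    (hp : ∃ j : Fin (2 ^ N), ∃ h : j.1 + 1 < 2 ^ N, p j ≠ p ⟨j.1 + 1, h⟩) :
    let Feas : (ℕ → ℕ → ℝ) → Prop := fun ξ =>
      (∀ i ∈ Finset.Icc 1 N, ∀ j ∈ Finset.Icc 1 (2 ^ i), 0 < ξ i j) ∧
      (∑ i ∈ Finset.Icc 1 N, ∑ j ∈ Finset.Icc 1 (2 ^ i), ξ i j = Λ - 1) ∧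
      (∀ i ∈ Finset.Icc 1 (N - 1), ∀ j ∈ Finset.Icc 1 (2 ^ i),
        max (ξ (i + 1) (2 * j - 1)) (ξ (i + 1) (2 * j)) ≤ ξ i j)
    let E : (ℕ → ℕ → ℝ) → ℝ := fun ξ =>
      (MN N r0 ξ)⁻¹.mulVec (bN N p Φ) ⬝ᵥ
        (AN N r0 ξ).mulVec ((MN N r0 ξ)⁻¹.mulVec (bN N p Φ))
    IsGLB {e : ℝ | ∃ ξ, Feas ξ ∧ e = E ξ}
        (r0 * Φ ^ 2 * (1 + (N : ℝ) ^ 2 / (Λ - 1))) ∧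
      r0 * Φ ^ 2 * (1 + (N : ℝ) ^ 2 / (Λ - 1)) ∉
        {e : ℝ | ∃ ξ, Feas ξ ∧ e = E ξ} := by
  intro Feas E
  have hEq : ∀ ξ : ℕ → ℕ → ℝ,
      E ξ = qflow r0 Φ ξ p ⬝ᵥ (AN N r0 ξ).mulVec (qflow r0 Φ ξ p) := fun _ => rfl
  refine ⟨⟨?_, ?_⟩, ?_⟩
  · rintro e ⟨ξ, ⟨hpos, hvol, _⟩, rfl⟩
    rw [hEq ξ]
    exact (key_decomp hN hr0 hΦ hΛ hpos hvol).1
  · intro w hw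
    by_contra hcon
    push_neg at hcon
    obtain ⟨ξ, hfeas, hlt⟩ := exists_low (p := p) hN hΛ hr0 hΦ
      (w - r0 * Φ ^ 2 * (1 + (N : ℝ) ^ 2 / (Λ - 1))) (by linarith)
    have hwle : w ≤ E ξ := hw ⟨ξ, hfeas, rfl⟩
    rw [hEq ξ] at hwle
    linarith
  · rintro ⟨ξ, ⟨hpos, hvol, _⟩, heq⟩
    rw [hEq ξ] at heq
    exact no_attain hN hr0 hΦ hΛ hpos hvol hp heq.symm
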